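/- Let t > 1 and let G be a finite simple graph whose adjacency matrix has spectrum {(4t+1)^1, (2t−1)^{2t}, (−1)^{(t+1)^2}, (−3)^{t^2}}. Let Q be a set of q vertices of G such that every vertex of Q has at least q−2 neighbors inside Q. Then q ≤ 2t+3. Moreover, if q = 2t+3, then exactly one vertex of Q has 2t+2 neighbors inside Q and the remaining 2t+2 vertices of Q each have exactly 2t+1 neighbors inside Q. -/

import Mathlib

open Polynomial Matrix SimpleGraph

/-- The `n × n`-grid: the Cartesian (box) product of two complete graphs on `Fin n`.
Vertices are pairs `(i, j)`, two distinct vertices being adjacent iff they agree in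
exactly one coordinate. -/
def gridGraph (n : ℕ) : SimpleGraph (Fin n × Fin n) :=
  (⊤ : SimpleGraph (Fin n)) □ (⊤ : SimpleGraph (Fin n))

/-- The `q`-clique extension of a graph `G`: the graph on `V × Fin q` in which `(x, i)`
and `(y, j)` are adjacent iff `x` and `y` are adjacent in `G`, or `x = y` and `i ≠ j`. -/
def cliqueExt {V : Type*} (q : ℕ) (G : SimpleGraph V) : SimpleGraph (V × Fin q) where
  Adj a b := G.Adj a.1 b.1 ∨ (a.1 = b.1 ∧ a.2 ≠ b.2)
  symm := by
    constructor
    rintro ⟨x, i⟩ ⟨y, j⟩ (h | ⟨h, hij⟩)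
    · exact Or.inl h.symm
    · exact Or.inr ⟨h.symm, hij.symm⟩
  loopless := by
    constructor
    rintro ⟨x, i⟩ (h | ⟨-, hij⟩)
    · exact G.loopless.irrefl x h
    · exact hij rfl

instance cliqueExtAdjDec {V : Type*} (q : ℕ) (G : SimpleGraph V) [DecidableRel G.Adj]
    [DecidableEq V] : DecidableRel (cliqueExt q G).Adj :=
  fun a b => inferInstanceAs (Decidable (G.Adj a.1 b.1 ∨ (a.1 = b.1 ∧ a.2 ≠ b.2)))

instance boxProdAdjDec {α β : Type*} (G : SimpleGraph α) (H : SimpleGraph β)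
    [DecidableRel G.Adj] [DecidableRel H.Adj] [DecidableEq α] [DecidableEq β] :
    DecidableRel (G □ H).Adj :=
  fun x y => inferInstanceAs (Decidable (G.Adj x.1 y.1 ∧ x.2 = y.2 ∨ H.Adj x.2 y.2 ∧ x.1 = y.1))

instance gridAdjDec (n : ℕ) : DecidableRel (gridGraph n).Adj := by
  unfold gridGraph; infer_instance

section
set_option linter.unusedSectionVars false
set_option maxHeartbeats 1600000
variable {V : Type*} [Fintype V] [DecidableEq V]

lemma star_mat_real (U : Matrix V V ℝ) : star U = Uᵀ := by
  rw [Matrix.star_eq_conjTranspose, conjTranspose_eq_transpose_of_trivial]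

lemma dot_mulVec_left (U : Matrix V V ℝ) (z w : V → ℝ) :
    (U *ᵥ z) ⬝ᵥ w = z ⬝ᵥ (Uᵀ *ᵥ w) := by
  simp only [dotProduct, mulVec, dotProduct, transpose_apply, Finset.sum_mul, Finset.mul_sum]
  rw [Finset.sum_comm]
  exact Finset.sum_congr rfl fun i _ => Finset.sum_congr rfl fun j _ => by ring

lemma eval_charpoly' (M : Matrix V V ℝ) (r : ℝ) :
    M.charpoly.eval r = (Matrix.diagonal (fun _ => r) - M).det := by
  rw [Matrix.charpoly, ← Polynomial.coe_evalRingHom, RingHom.map_det]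
  congr 1
  ext i j
  by_cases h : i = j
  · subst h; simp [Matrix.charmatrix_apply_eq]
  · simp [Matrix.charmatrix_apply_ne _ _ _ h, Matrix.diagonal_apply_ne _ h]

lemma charpoly_eq_prod (A : Matrix V V ℝ) (hA : A.IsHermitian) :
    A.charpoly = ∏ i, (X - C (hA.eigenvalues i)) := by
  apply Polynomial.funext
  intro r
  rw [eval_charpoly']
  set U : Matrix V V ℝ := (hA.eigenvectorUnitary : Matrix V V ℝ) with hUdef
  have hU2 : star U * U = 1 := (Unitary.mem_iff.mp hA.eigenvectorUnitary.2).1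
  have hU1 : U * star U = 1 := (Unitary.mem_iff.mp hA.eigenvectorUnitary.2).2
  have hod : RCLike.ofReal ∘ hA.eigenvalues = hA.eigenvalues := by
    funext i; simp
  have hs : A = U * Matrix.diagonal hA.eigenvalues * star U := by
    have := hA.spectral_theorem
    rwa [hod] at this
  have hc : U * Matrix.diagonal (fun _ : V => r) * star U = Matrix.diagonal (fun _ : V => r) := by
    rw [← Matrix.smul_one_eq_diagonal, mul_smul_comm, mul_one, smul_mul_assoc, hU1]
  have hdd : Matrix.diagonal (fun i => r - hA.eigenvalues i) =
      Matrix.diagonal (fun _ : V => r) - Matrix.diagonal hA.eigenvalues := by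
    ext i j; by_cases h : i = j <;> simp [h]
  have key : Matrix.diagonal (fun _ : V => r) - A =
      U * Matrix.diagonal (fun i => r - hA.eigenvalues i) * star U := by
    rw [hdd, Matrix.mul_sub, Matrix.sub_mul, hc, ← hs]
  have hdet : U.det * (star U).det = 1 := by rw [← Matrix.det_mul, hU1, Matrix.det_one]
  rw [key, Matrix.det_mul, Matrix.det_mul]
  have : U.det * (Matrix.diagonal fun i => r - hA.eigenvalues i).det * (star U).det =
      (Matrix.diagonal fun i => r - hA.eigenvalues i).det * (U.det * (star U).det) := by ring
  rw [this, hdet, mul_one, Matrix.det_diagonal, Polynomial.eval_prod]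
  exact Finset.prod_congr rfl fun i _ => by simp

section spec
variable (A : Matrix V V ℝ) (hA : A.IsHermitian)

lemma hU_mul_star : (hA.eigenvectorUnitary : Matrix V V ℝ) * star (hA.eigenvectorUnitary : Matrix V V ℝ) = 1 :=
  (Unitary.mem_iff.mp hA.eigenvectorUnitary.2).2

lemma hU_star_mul : star (hA.eigenvectorUnitary : Matrix V V ℝ) * (hA.eigenvectorUnitary : Matrix V V ℝ) = 1 :=
  (Unitary.mem_iff.mp hA.eigenvectorUnitary.2).1

lemma spec_real : A = (hA.eigenvectorUnitary : Matrix V V ℝ) * Matrix.diagonal hA.eigenvalues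
    * star (hA.eigenvectorUnitary : Matrix V V ℝ) := by
  have := hA.spectral_theorem
  have hod : RCLike.ofReal ∘ hA.eigenvalues = hA.eigenvalues := by funext i; simp
  rwa [hod] at this

lemma mulVec_eig (x : V → ℝ) : A *ᵥ x = (hA.eigenvectorUnitary : Matrix V V ℝ) *ᵥ
    (fun i => hA.eigenvalues i * ((star (hA.eigenvectorUnitary : Matrix V V ℝ) *ᵥ x) i)) := by
  nth_rewrite 1 [spec_real A hA]
  rw [← Matrix.mulVec_mulVec, ← Matrix.mulVec_mulVec]
  have : Matrix.diagonal hA.eigenvalues *ᵥ (star (hA.eigenvectorUnitary : Matrix V V ℝ) *ᵥ x) =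
      fun i => hA.eigenvalues i * ((star (hA.eigenvectorUnitary : Matrix V V ℝ) *ᵥ x) i) := by
    funext i; rw [Matrix.mulVec_diagonal]
  rw [this]

lemma dot_spec (x w : V → ℝ) :
    x ⬝ᵥ ((hA.eigenvectorUnitary : Matrix V V ℝ) *ᵥ w) =
      (star (hA.eigenvectorUnitary : Matrix V V ℝ) *ᵥ x) ⬝ᵥ w := by
  rw [dotProduct_comm, dot_mulVec_left, ← star_mat_real, dotProduct_comm]

lemma quad_eq1 (x : V → ℝ) : x ⬝ᵥ (A *ᵥ x) =
    ∑ i, hA.eigenvalues i * ((star (hA.eigenvectorUnitary : Matrix V V ℝ) *ᵥ x) i)^2 := by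
  rw [mulVec_eig A hA, dot_spec A hA]
  simp only [dotProduct]
  exact Finset.sum_congr rfl fun i _ => by ring

lemma quad_eq2 (x : V → ℝ) : x ⬝ᵥ x =
    ∑ i, ((star (hA.eigenvectorUnitary : Matrix V V ℝ) *ᵥ x) i)^2 := by
  nth_rewrite 2 [show x = (hA.eigenvectorUnitary : Matrix V V ℝ) *ᵥ
      (star (hA.eigenvectorUnitary : Matrix V V ℝ) *ᵥ x) by
    rw [Matrix.mulVec_mulVec, hU_mul_star, Matrix.one_mulVec]]
  rw [dot_spec A hA]
  simp only [dotProduct]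
  exact Finset.sum_congr rfl fun i _ => by ring

lemma dot_pair (x w : V → ℝ) : x ⬝ᵥ w =
    ∑ i, ((star (hA.eigenvectorUnitary : Matrix V V ℝ) *ᵥ x) i) *
      ((star (hA.eigenvectorUnitary : Matrix V V ℝ) *ᵥ w) i) := by
  nth_rewrite 1 [show w = (hA.eigenvectorUnitary : Matrix V V ℝ) *ᵥ
      (star (hA.eigenvectorUnitary : Matrix V V ℝ) *ᵥ w) by
    rw [Matrix.mulVec_mulVec, hU_mul_star, Matrix.one_mulVec]]
  rw [dot_spec A hA]
  rfl

end spec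

lemma even_double_sum (f : V → V → ℕ) (hsymm : ∀ x y, f x y = f y x) (hdiag : ∀ x, f x x = 0)
    (s : Finset V) : Even (∑ x ∈ s, ∑ y ∈ s, f x y) := by
  classical
  induction s using Finset.induction with
  | empty => simp
  | insert a s ha ih =>
    rw [Finset.sum_insert ha]
    have h1 : ∑ y ∈ insert a s, f a y = ∑ y ∈ s, f a y := by
      rw [Finset.sum_insert ha, hdiag, zero_add]
    have h2 : ∀ x ∈ s, ∑ y ∈ insert a s, f x y = f a x + ∑ y ∈ s, f x y := by
      intro x hx
      rw [Finset.sum_insert ha, hsymm x a]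
    rw [h1, Finset.sum_congr rfl h2, Finset.sum_add_distrib]
    have h3 : ∑ y ∈ s, f a y + (∑ x ∈ s, f a x + ∑ x ∈ s, ∑ y ∈ s, f x y) =
        (∑ y ∈ s, f a y + ∑ y ∈ s, f a y) + ∑ x ∈ s, ∑ y ∈ s, f x y := by ring
    rw [h3]
    exact (Even.add ⟨_, rfl⟩ ih)

lemma central (t : ℕ) (ht : 1 < t)
    (G : SimpleGraph V) [DecidableRel G.Adj]
    (hchar : (G.adjMatrix ℝ).charpoly =
      (X - C (4 * (t : ℝ) + 1)) * (X - C (2 * (t : ℝ) - 1)) ^ (2 * t) *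
        (X + 1) ^ ((t + 1) ^ 2) * (X + 3) ^ (t ^ 2)) (Q : Finset V) :
    Fintype.card V = 2*(t+1)^2 ∧
    2 * ((t:ℝ)+1)^2 * (∑ x ∈ Q, ((Q.filter (G.Adj x)).card : ℝ)) ≤
      (2*(t:ℝ)-1) * (2*((t:ℝ)+1)^2 * Q.card - (Q.card:ℝ)^2) + (4*(t:ℝ)+1) * (Q.card:ℝ)^2 := by
  classical
  set A := G.adjMatrix ℝ with hAdef
  have hA : A.IsHermitian := by
    rw [Matrix.IsHermitian, conjTranspose_eq_transpose_of_trivial]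
    exact (SimpleGraph.isSymm_adjMatrix G)
  set T : ℝ := (t : ℝ) with hT
  have hT2 : (2:ℝ) ≤ T := by
    rw [hT]; exact_mod_cast ht
  set ev := hA.eigenvalues with hev
  set U : Matrix V V ℝ := (hA.eigenvectorUnitary : Matrix V V ℝ) with hU
  -- the multiset of eigenvalues
  have e1 : (X + 1 : ℝ[X]) = X - C (-1) := by simp
  have e3 : (X + 3 : ℝ[X]) = X - C (-3) := by
    rw [map_neg, sub_neg_eq_add, map_ofNat C 3]
  have hprod : ∏ i, (X - C (ev i)) =
      (X - C (4*T+1)) * (X - C (2*T-1)) ^ (2*t) * (X - C (-1)) ^ ((t+1)^2)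
        * (X - C (-3)) ^ (t^2) := by
    rw [← charpoly_eq_prod A hA, hchar, e1, e3]
  have hrootsL : (∏ i, (X - C (ev i))).roots = Finset.univ.val.map ev := by
    have hc : (fun i => X - C (ev i)) = (fun a => X - C a) ∘ ev := rfl
    rw [Finset.prod_eq_multiset_prod, hc, ← Multiset.map_map,
      Polynomial.roots_multiset_prod_X_sub_C]
  have hne : ∀ (a : ℝ) (k : ℕ), ((X - C a) ^ k : ℝ[X]) ≠ 0 :=
    fun a k => pow_ne_zero k (X_sub_C_ne_zero a)
  have hrootsR : ((X - C (4*T+1)) * (X - C (2*T-1)) ^ (2*t) * (X - C (-1)) ^ ((t+1)^2)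
        * (X - C (-3)) ^ (t^2)).roots =
      {4*T+1} + (2*t) • {2*T-1} + ((t+1)^2) • ({-1} : Multiset ℝ) + (t^2) • {-3} := by
    rw [Polynomial.roots_mul (mul_ne_zero (mul_ne_zero (mul_ne_zero (X_sub_C_ne_zero _)
        (hne _ _)) (hne _ _)) (hne _ _)),
      Polynomial.roots_mul (mul_ne_zero (mul_ne_zero (X_sub_C_ne_zero _) (hne _ _)) (hne _ _)),
      Polynomial.roots_mul (mul_ne_zero (X_sub_C_ne_zero _) (hne _ _)),
      Polynomial.roots_pow, Polynomial.roots_pow, Polynomial.roots_pow,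
      Polynomial.roots_X_sub_C, Polynomial.roots_X_sub_C, Polynomial.roots_X_sub_C,
      Polynomial.roots_X_sub_C]
  have hms : Finset.univ.val.map ev =
      {4*T+1} + (2*t) • {2*T-1} + ((t+1)^2) • ({-1} : Multiset ℝ) + (t^2) • {-3} := by
    rw [← hrootsL, hprod, hrootsR]
  have hcardV : Fintype.card V = 2*(t+1)^2 := by
    have := congrArg Multiset.card hms
    simp [Multiset.card_nsmul] at this
    rw [this]; ring
  -- membership of eigenvalues
  have hmem : ∀ i, ev i = 4*T+1 ∨ ev i = 2*T-1 ∨ ev i = -1 ∨ ev i = -3 := by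
    intro i
    have hm : ev i ∈ Finset.univ.val.map ev :=
      Multiset.mem_map_of_mem ev (Finset.mem_univ i)
    rw [hms] at hm
    have h2t : 2*t ≠ 0 := by omega
    have ht1 : (t+1)^2 ≠ 0 := by positivity
    have ht2' : t^2 ≠ 0 := by positivity
    simp only [Multiset.mem_add, Multiset.mem_nsmul, Multiset.mem_singleton, h2t, ht1, ht2',
      ne_eq, not_false_eq_true, true_and, false_or] at hm
    tauto
  have hsumf : ∀ (f : ℝ → ℝ), ∑ i, f (ev i) = ((Finset.univ.val.map ev).map f).sum := by
    intro f
    rw [Multiset.map_map]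
    rfl
  have hsq : ∑ i, (ev i)^2 = (4*T+1) * (2*(T+1)^2) := by
    rw [hsumf (fun a => a^2), hms]
    simp [Multiset.nsmul_singleton, Multiset.map_replicate, Multiset.sum_replicate, hT,
      nsmul_eq_mul]
    push_cast
    ring
  -- regularity
  set o : V → ℝ := Function.const V (1:ℝ) with ho
  set z : V → ℝ := star U *ᵥ o with hz
  have hoo : o ⬝ᵥ o = 2*(T+1)^2 := by
    have : o ⬝ᵥ o = (Fintype.card V : ℝ) := by
      simp [ho, dotProduct, Finset.card_univ]
    rw [this, hcardV, hT]; push_cast; ring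
  have hdeg : o ⬝ᵥ (A *ᵥ o) = ∑ v, (G.degree v : ℝ) := by
    have hv : ∀ v, (A *ᵥ o) v = (G.degree v : ℝ) := by
      intro v
      rw [hAdef, ho]
      simpa using SimpleGraph.adjMatrix_mulVec_const_apply (G := G) (a := (1:ℝ)) (v := v)
    simp only [dotProduct]
    refine Finset.sum_congr rfl fun v _ => ?_
    rw [hv v, ho]
    simp
  have hs' : A = U * Matrix.diagonal ev * star U := by
    rw [hev, hU]; exact spec_real A hA
  have hAA : A * A = U * (Matrix.diagonal (fun i => ev i * ev i)) * star U := by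
    calc A * A = (U * Matrix.diagonal ev * star U) * (U * Matrix.diagonal ev * star U) := by
          rw [← hs']
      _ = U * (Matrix.diagonal ev * (star U * U) * Matrix.diagonal ev) * star U := by
          simp only [Matrix.mul_assoc]
      _ = U * (Matrix.diagonal (fun i => ev i * ev i)) * star U := by
          rw [hU, hU_star_mul A hA, Matrix.mul_one, Matrix.diagonal_mul_diagonal]
  have htr : ∑ v, (G.degree v : ℝ) = ∑ i, (ev i)^2 := by
    have h1 : Matrix.trace (A * A) = ∑ v, (G.degree v : ℝ) := by
      simp only [Matrix.trace, Matrix.diag, hAdef,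
        SimpleGraph.adjMatrix_mul_self_apply_self]
    have h2 : Matrix.trace (A * A) = ∑ i, (ev i)^2 := by
      rw [hAA, Matrix.trace_mul_cycle, hU, hU_star_mul A hA, Matrix.one_mul,
        Matrix.trace_diagonal]
      exact Finset.sum_congr rfl fun i _ => (sq (ev i)).symm
    rw [← h1, h2]
  have hq1o : o ⬝ᵥ (A *ᵥ o) = ∑ i, ev i * (z i)^2 := quad_eq1 A hA o
  have hq2o : o ⬝ᵥ o = ∑ i, (z i)^2 := quad_eq2 A hA o
  have hzsum : ∑ i, ev i * (z i)^2 = (4*T+1) * (2*(T+1)^2) := by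
    rw [← hq1o, hdeg, htr, hsq]
  have hz2 : ∑ i, (z i)^2 = 2*(T+1)^2 := by rw [← hq2o, hoo]
  have hvanish : ∀ i, (4*T+1 - ev i) * (z i)^2 = 0 := by
    have hsum0 : ∑ i, (4*T+1 - ev i) * (z i)^2 = 0 := by
      simp only [sub_mul]
      rw [Finset.sum_sub_distrib, ← Finset.mul_sum, hz2, hzsum]
      ring
    have hnn : ∀ i ∈ Finset.univ, (0:ℝ) ≤ (4*T+1 - ev i) * (z i)^2 := by
      intro i _
      apply mul_nonneg _ (sq_nonneg _)
      rcases hmem i with h|h|h|h <;> rw [h] <;> linarith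
    intro i
    exact (Finset.sum_eq_zero_iff_of_nonneg hnn).mp hsum0 i (Finset.mem_univ i)
  have hz0 : ∀ i, ev i ≠ 4*T+1 → z i = 0 := by
    intro i hne
    rcases mul_eq_zero.mp (hvanish i) with h|h
    · exact absurd (by linarith [h] : ev i = 4*T+1) hne
    · exact pow_eq_zero_iff (by norm_num) |>.mp h
  have hUz : U *ᵥ z = o := by
    rw [hz, Matrix.mulVec_mulVec, hU_mul_star A hA, Matrix.one_mulVec]
  have hAo : A *ᵥ o = (4*T+1) • o := by
    have h1 : A *ᵥ o = U *ᵥ (fun i => ev i * z i) := mulVec_eig A hA o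
    have h2 : (fun i => ev i * z i) = (4*T+1) • z := by
      funext i
      simp only [Pi.smul_apply, smul_eq_mul]
      by_cases h : ev i = 4*T+1
      · rw [h]
      · rw [hz0 i h]; ring
    rw [h1, h2, Matrix.mulVec_smul, hUz]
  -- the unique top eigenvalue index
  have hd1 : (4*T+1) ≠ 2*T-1 := by intro h; nlinarith
  have hd2 : (4*T+1) ≠ -1 := by intro h; nlinarith
  have hd3 : (4*T+1) ≠ -3 := by intro h; nlinarith
  have hcount : Multiset.count (4*T+1) (Finset.univ.val.map ev) = 1 := by
    rw [hms]
    rw [Multiset.count_add, Multiset.count_add, Multiset.count_add,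
      Multiset.count_nsmul, Multiset.count_nsmul, Multiset.count_nsmul,
      Multiset.count_singleton, Multiset.count_singleton, Multiset.count_singleton,
      Multiset.count_singleton]
    rw [if_pos rfl, if_neg hd1, if_neg hd2, if_neg hd3]
    simp
  have hfilt : ∃ i0 : V, ∀ i, ev i = 4*T+1 ↔ i = i0 := by
    rw [Multiset.count_map] at hcount
    obtain ⟨i0, hi0⟩ := Multiset.card_eq_one.mp hcount
    refine ⟨i0, fun i => ⟨fun h => ?_, fun h => ?_⟩⟩
    · have hmemf : i ∈ Multiset.filter (fun a => 4*T+1 = ev a) Finset.univ.val :=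
        Multiset.mem_filter.mpr ⟨Finset.mem_val.mpr (Finset.mem_univ i), h.symm⟩
      rw [hi0] at hmemf
      exact Multiset.mem_singleton.mp hmemf
    · have hm0 : i0 ∈ Multiset.filter (fun a => 4*T+1 = ev a) Finset.univ.val := by
        rw [hi0]; exact Multiset.mem_singleton_self i0
      rw [h]
      exact ((Multiset.mem_filter.mp hm0).2).symm
  obtain ⟨i0, hi0⟩ := hfilt
  have hzi0 : z i0 ≠ 0 := by
    intro h0
    have hallz : ∀ i, z i = 0 := by
      intro i
      by_cases h : ev i = 4*T+1
      · rw [(hi0 i).mp h]; exact h0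
      · exact hz0 i h
    have : ∑ i, (z i)^2 = 0 := by simp [hallz]
    rw [hz2] at this
    nlinarith
  -- the test vector
  set Nr : ℝ := 2*(T+1)^2 with hNr
  have hNrpos : 0 < Nr := by rw [hNr]; nlinarith
  set qr : ℝ := (Q.card : ℝ) with hqr
  set χ : V → ℝ := fun v => if v ∈ Q then 1 else 0 with hχ
  set x : V → ℝ := Nr • χ - qr • o with hx
  set y : V → ℝ := star U *ᵥ x with hy
  have hoχ : o ⬝ᵥ χ = qr := by
    rw [ho, hχ, hqr]
    simp [dotProduct]
  have hχo : χ ⬝ᵥ o = qr := by rw [dotProduct_comm]; exact hoχ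
  have hox : o ⬝ᵥ x = 0 := by
    rw [hx, dotProduct_sub, dotProduct_smul, dotProduct_smul, hoχ, hoo]
    simp [smul_eq_mul, mul_comm]
  have hyi0 : y i0 = 0 := by
    have hop : o ⬝ᵥ x = ∑ i, z i * y i := dot_pair A hA o x
    have hsingle : ∑ i, z i * y i = z i0 * y i0 := by
      apply Finset.sum_eq_single
      · intro i _ hne
        rw [hz0 i (fun h => hne ((hi0 i).mp h))]
        ring
      · intro h
        exact absurd (Finset.mem_univ i0) h
    rw [hox] at hop
    have hz0y : z i0 * y i0 = 0 := by rw [← hsingle, ← hop]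
    rcases mul_eq_zero.mp hz0y with h|h
    · exact absurd h hzi0
    · exact h
  have hkey : x ⬝ᵥ (A *ᵥ x) ≤ (2*T-1) * (x ⬝ᵥ x) := by
    have hq1 : x ⬝ᵥ (A *ᵥ x) = ∑ i, ev i * (y i)^2 := quad_eq1 A hA x
    have hq2 : x ⬝ᵥ x = ∑ i, (y i)^2 := quad_eq2 A hA x
    rw [hq1, hq2, Finset.mul_sum]
    apply Finset.sum_le_sum
    intro i _
    by_cases h : i = i0
    · subst h
      rw [hyi0]
      simp
    · have hne : ev i ≠ 4*T+1 := fun hh => h ((hi0 i).mp hh)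
      have hle : ev i ≤ 2*T-1 := by
        rcases hmem i with h1|h1|h1|h1
        · exact absurd h1 hne
        · rw [h1]
        · rw [h1]; linarith
        · rw [h1]; linarith
      exact mul_le_mul_of_nonneg_right hle (sq_nonneg _)
  -- expansion of the quadratic forms
  have hAT : Aᵀ = A := by
    rw [← conjTranspose_eq_transpose_of_trivial]; exact hA
  have hoAχ : o ⬝ᵥ (A *ᵥ χ) = (4*T+1) * qr := by
    rw [Matrix.dotProduct_mulVec, ← Matrix.mulVec_transpose, hAT, hAo, smul_dotProduct,
      hoχ, smul_eq_mul]
  have hχχ : χ ⬝ᵥ χ = qr := by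
    rw [hχ, hqr]
    have hvv : ∀ v, (if v ∈ Q then (1:ℝ) else 0) * (if v ∈ Q then 1 else 0) =
        if v ∈ Q then 1 else 0 := fun v => by by_cases h : v ∈ Q <;> simp [h]
    simp only [dotProduct, hvv]
    rw [Finset.sum_boole, Finset.filter_univ_mem]
  have hSχ : χ ⬝ᵥ (A *ᵥ χ) = ∑ v ∈ Q, ((Q.filter (G.Adj v)).card : ℝ) := by
    rw [hAdef, hχ, SimpleGraph.dotProduct_mulVec_adjMatrix]
    rw [← Finset.sum_subset (Finset.subset_univ Q) (fun i _ hiQ => by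
      apply Finset.sum_eq_zero
      intro j _
      simp [hiQ])]
    refine Finset.sum_congr rfl fun i hiQ => ?_
    have hterm : ∀ j, (if G.Adj i j then (if i ∈ Q then (1:ℝ) else 0) * (if j ∈ Q then 1 else 0)
        else 0) = if j ∈ Q.filter (G.Adj i) then (1:ℝ) else 0 := by
      intro j
      by_cases h1 : G.Adj i j <;> by_cases h2 : j ∈ Q <;>
        simp [h1, h2, hiQ, Finset.mem_filter]
    simp only [hterm]
    rw [Finset.sum_boole, Finset.filter_univ_mem]
  have hexp1 : x ⬝ᵥ (A *ᵥ x) =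
      Nr*Nr*(∑ v ∈ Q, ((Q.filter (G.Adj v)).card : ℝ)) - Nr*(4*T+1)*qr^2 := by
    simp only [hx, Matrix.mulVec_sub, Matrix.mulVec_smul, hAo, sub_dotProduct,
      dotProduct_sub, smul_dotProduct, dotProduct_smul, smul_eq_mul,
      hSχ, hoAχ, hχo, hoχ, hoo]
    ring
  have hexp2 : x ⬝ᵥ x = Nr*Nr*qr - Nr*qr^2 := by
    simp only [hx, sub_dotProduct, dotProduct_sub, smul_dotProduct,
      dotProduct_smul, smul_eq_mul, hχχ, hχo, hoχ, hoo]
    ring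
  refine ⟨hcardV, ?_⟩
  rw [hexp1, hexp2] at hkey
  nlinarith [hkey, hNrpos]

end


/-- Let `t > 1` and let `G` be a finite simple graph whose adjacency matrix has spectrum
`{(4t+1)^1, (2t−1)^{2t}, (−1)^{(t+1)^2}, (−3)^{t^2}}`. Let `Q` be a set of `q` vertices of
`G` such that every vertex of `Q` has at least `q−2` neighbors inside `Q`. Then `q ≤ 2t+3`;
moreover, if `q = 2t+3`, then exactly one vertex of `Q` has `2t+2` neighbors inside `Q`, and
the remaining `2t+2` vertices of `Q` each have exactly `2t+1` neighbors inside `Q`. -/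
theorem stmt_11 (t : ℕ) (ht : 1 < t) {V : Type*} [Fintype V] [DecidableEq V]
    (G : SimpleGraph V) [DecidableRel G.Adj]
    (hchar : (G.adjMatrix ℝ).charpoly =
      (X - C (4 * (t : ℝ) + 1)) * (X - C (2 * (t : ℝ) - 1)) ^ (2 * t) *
        (X + 1) ^ ((t + 1) ^ 2) * (X + 3) ^ (t ^ 2))
    (q : ℕ) (Q : Finset V) (hQcard : Q.card = q)
    (hQdeg : ∀ x ∈ Q, q - 2 ≤ (Q.filter (G.Adj x)).card) :
    q ≤ 2 * t + 3 ∧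
      (q = 2 * t + 3 →
        (Q.filter fun x => (Q.filter (G.Adj x)).card = 2 * t + 2).card = 1 ∧
        (Q.filter fun x => (Q.filter (G.Adj x)).card = 2 * t + 1).card = 2 * t + 2) := by
  classical
  obtain ⟨hcardV, hineq⟩ := central t ht G hchar Q
  rw [hQcard] at hineq
  set T : ℝ := (t:ℝ) with hTdef
  have hT2 : (2:ℝ) ≤ T := by rw [hTdef]; exact_mod_cast ht
  set S : ℕ := ∑ x ∈ Q, (Q.filter (G.Adj x)).card with hSdef
  have hSreal : (∑ x ∈ Q, ((Q.filter (G.Adj x)).card : ℝ)) = (S:ℝ) := by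
    rw [hSdef]; push_cast; rfl
  rw [hSreal] at hineq
  -- upper bound on inner degrees
  have hub : ∀ x ∈ Q, (Q.filter (G.Adj x)).card ≤ q - 1 := by
    intro x hx
    have hsub : Q.filter (G.Adj x) ⊆ Q.erase x := by
      intro y hy
      rcases Finset.mem_filter.mp hy with ⟨hyQ, hadj⟩
      exact Finset.mem_erase.mpr ⟨fun he => G.loopless.irrefl x (he ▸ hadj), hyQ⟩
    calc (Q.filter (G.Adj x)).card ≤ (Q.erase x).card := Finset.card_le_card hsub
      _ = q - 1 := by rw [Finset.card_erase_of_mem hx, hQcard]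
  -- handshaking: S is even
  have hEven : Even S := by
    have hform : S = ∑ x ∈ Q, ∑ y ∈ Q, (if G.Adj x y then 1 else 0) := by
      rw [hSdef]
      exact Finset.sum_congr rfl fun x _ => by rw [Finset.card_filter]
    rw [hform]
    refine even_double_sum _ (fun x y => ?_) (fun x => by simp) Q
    by_cases h : G.Adj x y
    · rw [if_pos h, if_pos h.symm]
    · rw [if_neg h, if_neg (fun hh => h hh.symm)]
  -- part 1
  have hpart1 : q ≤ 2*t + 3 := by
    by_contra hq
    push_neg at hq
    have hq4 : 2*t + 4 ≤ q := hq
    have hq2 : 2 ≤ q := by omega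
    have hSlb : q * (q - 2) ≤ S := by
      have := Finset.card_nsmul_le_sum Q (fun x => (Q.filter (G.Adj x)).card) (q-2) hQdeg
      rwa [hQcard, smul_eq_mul] at this
    have hqr4 : 2*T + 4 ≤ (q:ℝ) := by
      rw [hTdef]; push_cast; exact_mod_cast (by exact_mod_cast hq4 : ((2*t+4 : ℕ):ℝ) ≤ (q:ℝ))
    have hSlbr : (q:ℝ) * ((q:ℝ) - 2) ≤ (S:ℝ) := by
      have h2 : ((q * (q-2) : ℕ) : ℝ) ≤ (S:ℝ) := by exact_mod_cast hSlb
      rwa [Nat.cast_mul, Nat.cast_sub hq2, Nat.cast_ofNat] at h2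
    have hqpos : (0:ℝ) < (q:ℝ) := by positivity
    have h2 : 2*(T+1)^2*((q:ℝ)*((q:ℝ)-2)) ≤
        (2*T-1) * (2*(T+1)^2 * (q:ℝ) - (q:ℝ)^2) + (4*T+1) * (q:ℝ)^2 := by
      refine le_trans ?_ hineq
      have hfac : (0:ℝ) ≤ 2*(T+1)^2 := by positivity
      exact mul_le_mul_of_nonneg_left hSlbr hfac
    have h3 : 2*(T+1)^2*((q:ℝ)-2) ≤ (2*T-1) * (2*(T+1)^2 - (q:ℝ)) + (4*T+1) * (q:ℝ) := by
      nlinarith [h2, hqpos]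
    have h4 : (0:ℝ) ≤ T * ((q:ℝ) - 2*T - 4) := by nlinarith
    have h5 : (1:ℝ) ≤ T*(q:ℝ) - 2*T^2 - 3*T - 1 := by nlinarith
    nlinarith [h3, h5, hT2]
  refine ⟨hpart1, fun hq23 => ?_⟩
  -- part 2
  have hlow : ∀ x ∈ Q, 2*t+1 ≤ (Q.filter (G.Adj x)).card := by
    intro x hx
    have := hQdeg x hx
    omega
  have hcover : ∀ x ∈ Q, (Q.filter (G.Adj x)).card = 2*t+1 ∨ (Q.filter (G.Adj x)).card = 2*t+2 := by
    intro x hx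
    have h1 := hlow x hx
    have h2 := hub x hx
    omega
  set p : V → Prop := fun x => (Q.filter (G.Adj x)).card = 2*t+2 with hp
  have hA2eq : Q.filter (fun x => (Q.filter (G.Adj x)).card = 2*t+1) = Q.filter (fun x => ¬ p x) := by
    apply Finset.filter_congr
    intro x hx
    have := hcover x hx
    rw [hp]
    constructor
    · intro h; omega
    · intro h; omega
  set s : ℕ := (Q.filter p).card with hs
  set c2 : ℕ := (Q.filter (fun x => ¬ p x)).card with hc2
  have hcards : s + c2 = 2*t+3 := by
    rw [hs, hc2, Finset.card_filter_add_card_filter_not, hQcard, hq23]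
  have hsum1 : ∑ x ∈ Q.filter p, (Q.filter (G.Adj x)).card = s * (2*t+2) := by
    rw [hs]
    apply Finset.sum_const_nat
    intro x hx
    exact (Finset.mem_filter.mp hx).2
  have hsum2 : ∑ x ∈ Q.filter (fun x => ¬ p x), (Q.filter (G.Adj x)).card = c2 * (2*t+1) := by
    rw [hc2]
    apply Finset.sum_const_nat
    intro x hx
    rcases Finset.mem_filter.mp hx with ⟨hxQ, hnp⟩
    rcases hcover x hxQ with h|h
    · exact h
    · exact absurd h hnp
  have hSval : S = (2*t+1)*(2*t+3) + s := by
    have hsplit : ∑ x ∈ Q.filter p, (Q.filter (G.Adj x)).card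
        + ∑ x ∈ Q.filter (fun x => ¬ p x), (Q.filter (G.Adj x)).card = S := by
      rw [hSdef]
      exact Finset.sum_filter_add_sum_filter_not Q p _
    rw [← hsplit, hsum1, hsum2]
    have hsle : s ≤ 2*t+3 := by omega
    cases Nat.le.dest hsle with
    | intro k hk =>
      have h1 : c2 = k := by omega
      rw [h1, ← hk]
      ring
  -- s ≤ 2 from the spectral inequality
  have hsle2 : s ≤ 2 := by
    have hqr : ((q:ℕ):ℝ) = 2*T+3 := by rw [hq23, hTdef]; push_cast; ring
    have hSr : (S:ℝ) = (2*T+1)*(2*T+3) + (s:ℝ) := by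
      rw [hSval, hTdef]; push_cast; ring
    rw [hqr, hSr] at hineq
    have hsr3 : (s:ℝ) < 3 := by nlinarith [hineq, hT2, sq_nonneg (T+1), sq_nonneg T]
    exact_mod_cast Nat.lt_succ_iff.mp (by exact_mod_cast hsr3 : s < 3)
  -- parity forces s = 1
  have hodd : Odd ((2*t+1)*(2*t+3)) := Odd.mul ⟨t, by ring⟩ ⟨t+1, by ring⟩
  have hs1 : s = 1 := by
    rw [hSval] at hEven
    rcases hEven with ⟨m, hm⟩
    rcases hodd with ⟨n, hn⟩
    omega
  constructor
  · exact hs1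
  · rw [hA2eq, ← hc2]
    omega
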